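/- Let r ≥ 0, s, and k be integers. Then the determinant of the (r+1)×(r+1) matrix whose (i,j) entry (0 ≤ i, j ≤ r) is F_{s+ik}^{r−j}·F_{s+(i+1)k}^{j} equals (−1)^{(s+1)·C(r+1,2) + k·C(r+1,3)} · F_k^{C(r+1,2)} · ∏_{ℓ=1}^{r} F_{kℓ}^{r+1−ℓ}. -/

import Mathlib

open Finset

lemma prod_pairs_mul {M : Type*} [CommMonoid M] (n : ℕ) (f : Fin (n + 1) → M) :
    ∏ i : Fin (n + 1), ∏ j ∈ Ioi i, (f i * f j) = ∏ i : Fin (n + 1), f i ^ n := by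
  have h1 : ∏ i : Fin (n + 1), ∏ j ∈ Ioi i, (f i * f j)
      = (∏ i : Fin (n + 1), f i ^ (Ioi i).card) * ∏ i : Fin (n + 1), ∏ j ∈ Ioi i, f j := by
    rw [← Finset.prod_mul_distrib]
    refine Finset.prod_congr rfl fun i _ => ?_
    rw [Finset.prod_mul_distrib, Finset.prod_const]
  have h2 : ∏ i : Fin (n + 1), ∏ j ∈ Ioi i, f j
      = ∏ j : Fin (n + 1), f j ^ (Iio j).card := by
    rw [Finset.prod_comm' (t' := Finset.univ) (s' := fun j => Iio j)
      (fun x y => by simp [Finset.mem_Ioi, Finset.mem_Iio, and_comm])]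
    exact Finset.prod_congr rfl fun j _ => Finset.prod_const _
  rw [h1, h2, ← Finset.prod_mul_distrib]
  refine Finset.prod_congr rfl fun i _ => ?_
  rw [← pow_add, Fin.card_Ioi, Fin.card_Iio]
  congr 1
  omega

lemma bivdet_field {K : Type*} [Field K] (n : ℕ) (x y : Fin (n + 1) → K)
    (hx : ∀ i, x i ≠ 0) :
    Matrix.det (Matrix.of fun i j : Fin (n + 1) => x i ^ (n - (j : ℕ)) * y i ^ (j : ℕ)) =
      ∏ i : Fin (n + 1), ∏ j ∈ Ioi i, (x i * y j - x j * y i) := by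
  have hM : (Matrix.of fun i j : Fin (n + 1) => x i ^ (n - (j : ℕ)) * y i ^ (j : ℕ))
      = Matrix.diagonal (fun i => x i ^ n) * Matrix.vandermonde (fun i => y i / x i) := by
    ext i j
    rw [Matrix.diagonal_mul]
    simp only [Matrix.of_apply, Matrix.vandermonde_apply, div_pow]
    rw [mul_div_assoc', eq_div_iff (pow_ne_zero _ (hx i)), mul_right_comm, ← pow_add]
    congr 2
    omega
  rw [hM, Matrix.det_mul, Matrix.det_diagonal, Matrix.det_vandermonde]
  have key : ∀ i j : Fin (n + 1),
      x i * y j - x j * y i = (x i * x j) * (y j / x j - y i / x i) := by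
    intro i j
    field_simp [hx i, hx j]
  calc (∏ i : Fin (n+1), x i ^ n) * ∏ i : Fin (n+1), ∏ j ∈ Ioi i, (y j / x j - y i / x i)
      = (∏ i : Fin (n+1), ∏ j ∈ Ioi i, (x i * x j)) *
        ∏ i : Fin (n+1), ∏ j ∈ Ioi i, (y j / x j - y i / x i) := by
        rw [prod_pairs_mul]
    _ = ∏ i : Fin (n+1), ∏ j ∈ Ioi i, ((x i * x j) * (y j / x j - y i / x i)) := by
        rw [← Finset.prod_mul_distrib]
        exact Finset.prod_congr rfl fun i _ => (Finset.prod_mul_distrib).symm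
    _ = ∏ i : Fin (n+1), ∏ j ∈ Ioi i, (x i * y j - x j * y i) := by
        refine Finset.prod_congr rfl fun i _ => Finset.prod_congr rfl fun j _ => ?_
        rw [key]

lemma ringhom_push {R S : Type*} [CommRing R] [CommRing S] (f : R →+* S) (n : ℕ)
    (x y : Fin (n + 1) → R) :
    f (Matrix.det (Matrix.of fun i j : Fin (n + 1) => x i ^ (n - (j : ℕ)) * y i ^ (j : ℕ)))
      = Matrix.det (Matrix.of fun i j : Fin (n + 1) =>
          f (x i) ^ (n - (j : ℕ)) * f (y i) ^ (j : ℕ)) := by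
  rw [RingHom.map_det]
  congr 1
  ext i j
  simp [Matrix.map_apply]

lemma bivdet {R : Type*} [CommRing R] (n : ℕ) (x y : Fin (n + 1) → R) :
    Matrix.det (Matrix.of fun i j : Fin (n + 1) => x i ^ (n - (j : ℕ)) * y i ^ (j : ℕ)) =
      ∏ i : Fin (n + 1), ∏ j ∈ Ioi i, (x i * y j - x j * y i) := by
  classical
  let R₀ := MvPolynomial (Fin (n + 1) ⊕ Fin (n + 1)) ℤ
  let X : Fin (n + 1) → R₀ := fun i => MvPolynomial.X (Sum.inl i)
  let Y : Fin (n + 1) → R₀ := fun i => MvPolynomial.X (Sum.inr i)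
  let K := FractionRing R₀
  have hinj : Function.Injective (algebraMap R₀ K) := IsFractionRing.injective R₀ K
  have base : Matrix.det (Matrix.of fun i j : Fin (n + 1) =>
        X i ^ (n - (j : ℕ)) * Y i ^ (j : ℕ)) =
      ∏ i : Fin (n + 1), ∏ j ∈ Ioi i, (X i * Y j - X j * Y i) := by
    apply hinj
    rw [ringhom_push (algebraMap R₀ K)]
    rw [bivdet_field n (fun i => algebraMap R₀ K (X i)) (fun i => algebraMap R₀ K (Y i))
      (fun i => by
        rw [map_ne_zero_iff _ hinj]
        exact MvPolynomial.X_ne_zero _)]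
    simp [map_prod, map_sub, map_mul]
  have := congrArg (MvPolynomial.eval₂Hom (Int.castRingHom R) (Sum.elim x y)) base
  rw [ringhom_push] at this
  simpa [X, Y, map_prod, map_sub, map_mul] using this


lemma fib_unique (G H : ℤ → ℤ) (hG : ∀ m : ℤ, G (m + 2) = G (m + 1) + G m)
    (hH : ∀ m : ℤ, H (m + 2) = H (m + 1) + H m) (t : ℤ)
    (h0 : G t = H t) (h1 : G (t + 1) = H (t + 1)) : ∀ m : ℤ, G m = H m := by
  have key : ∀ m : ℤ, G (t + m) = H (t + m) ∧ G (t + m + 1) = H (t + m + 1) := by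
    intro m
    induction m using Int.induction_on with
    | zero => simpa using ⟨h0, h1⟩
    | succ m ih =>
      obtain ⟨ih1, ih2⟩ := ih
      have e1 : t + (↑m + 1) = t + ↑m + 1 := by ring
      have e2 : t + (↑m + 1) + 1 = t + ↑m + 2 := by ring
      refine ⟨by rw [e1]; exact ih2, ?_⟩
      rw [e2, hG, hH, ih1, ih2]
    | pred m ih =>
      obtain ⟨ih1, ih2⟩ := ih
      have e1 : t + (-↑m - 1) + 1 = t + -↑m := by ring
      have e2 : t + -↑m + 1 = t + (-↑m - 1) + 2 := by ring
      refine ⟨?_, by rw [e1]; exact ih1⟩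
      have hG' := hG (t + (-↑m - 1))
      have hH' := hH (t + (-↑m - 1))
      rw [e1, ← e2] at hG' hH'
      omega
  intro m
  have := (key (m - t)).1
  rwa [show t + (m - t) = m by ring] at this

section Fib
variable (F : ℤ → ℤ) (hF0 : F 0 = 0) (hF1 : F 1 = 1)
  (hF : ∀ n : ℤ, F n = F (n - 1) + F (n - 2))

include hF in
lemma fib_rec2 : ∀ m : ℤ, F (m + 2) = F (m + 1) + F m := by
  intro m
  have := hF (m + 2)
  rwa [show m + 2 - 1 = m + 1 by ring, show m + 2 - 2 = m by ring] at this

include hF0 hF1 hF in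
lemma docagne : ∀ b c : ℤ,
    F (b + 1) * F (b + c) - F (b + c + 1) * F b = ((-1 : ℤˣ) ^ b : ℤˣ) * F c := by
  have h2 := fib_rec2 F hF
  intro b c
  induction b using Int.induction_on with
  | zero => simp [hF0, hF1]
  | succ b ih =>
    have e1 : (↑b : ℤ) + 1 + 1 = ↑b + 2 := by ring
    have e3 : (↑b : ℤ) + 1 + c + 1 = (↑b + c) + 2 := by ring
    have e2 : (↑b : ℤ) + 1 + c = (↑b + c) + 1 := by ring
    have hu : ((-1 : ℤˣ) ^ ((↑b : ℤ) + 1) : ℤˣ) = -((-1 : ℤˣ) ^ (↑b : ℤ)) := by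
      rw [zpow_add, zpow_one]; simp
    rw [e1, e3, e2, h2 (↑b + c), h2 ↑b, hu]
    push_cast
    linear_combination (-1 : ℤ) * ih
  | pred b ih =>
    have e1 : (-↑b : ℤ) - 1 + 1 = -↑b := by ring
    have e5 : (-↑b : ℤ) - 1 + c + 1 = -↑b + c := by ring
    have hu : ((-1 : ℤˣ) ^ ((-↑b : ℤ) - 1) : ℤˣ) = -((-1 : ℤˣ) ^ (-↑b : ℤ)) := by
      rw [sub_eq_add_neg, zpow_add]; simp
    have hA := h2 (-↑b - 1)
    rw [show (-↑b : ℤ) - 1 + 2 = -↑b + 1 by ring, e1] at hA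
    have hB := h2 (-↑b - 1 + c)
    rw [show (-↑b : ℤ) - 1 + c + 2 = -↑b + c + 1 by ring, e5] at hB
    rw [e1, e5, hu]
    push_cast
    push_cast at ih
    linear_combination (-1 : ℤ) * ih + F (-↑b + c) * hA + (- F (-↑b)) * hB

include hF0 hF1 hF in
lemma vajda : ∀ a b c : ℤ,
    F a * F (b + c) - F b * F (a + c) = ((-1 : ℤˣ) ^ b : ℤˣ) * (F (a - b) * F c) := by
  have h2 := fib_rec2 F hF
  intro a b c
  refine fib_unique (fun a => F a * F (b + c) - F b * F (a + c))
    (fun a => ((-1 : ℤˣ) ^ b : ℤˣ) * (F (a - b) * F c)) ?_ ?_ b ?_ ?_ a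
  · intro m
    have h1 := h2 m
    have h3 := h2 (m + c)
    rw [show m + c + 2 = m + 2 + c by ring, show m + c + 1 = m + 1 + c by ring] at h3
    rw [h1, h3]; ring
  · intro m
    have h1 := h2 (m - b)
    rw [show m - b + 2 = m + 2 - b by ring, show m - b + 1 = m + 1 - b by ring] at h1
    rw [h1]; ring
  · rw [show b - b = 0 by ring, hF0]
    simp
  · have hd := docagne F hF0 hF1 hF b c
    rw [show b + 1 - b = 1 by ring, hF1, show b + 1 + c = b + c + 1 by ring]
    linear_combination hd

include hF0 hF1 hF in
lemma fib_neg : ∀ m : ℤ, F (-m) = ((-1 : ℤˣ) ^ (m + 1) : ℤˣ) * F m := by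
  intro m
  have h := vajda F hF0 hF1 hF 0 m 1
  rw [hF0, show (0 : ℤ) + 1 = 1 by ring, hF1] at h
  have h2 : -F m = ((-1 : ℤˣ) ^ m : ℤˣ) * F (0 - m) := by linear_combination h
  have h3' : (((-1 : ℤˣ) ^ m : ℤˣ) : ℤ) * (((-1 : ℤˣ) ^ m : ℤˣ) : ℤ) = 1 := by
    rw [← Units.val_mul, ← zpow_add]
    have : ((-1 : ℤˣ) ^ (m + m) : ℤˣ) = ((-1 : ℤˣ) ^ 2 : ℤˣ) ^ m := by
      rw [← zpow_natCast, ← zpow_mul]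
      congr 1; ring
    rw [this]; simp
  have h4 : ((-1 : ℤˣ) ^ (m + 1) : ℤˣ) = -((-1 : ℤˣ) ^ m : ℤˣ) := by
    rw [zpow_add, zpow_one]; simp
  rw [show -m = 0 - m by ring, h4]
  calc F (0 - m)
      = ((((-1 : ℤˣ) ^ m : ℤˣ) : ℤ) * (((-1 : ℤˣ) ^ m : ℤˣ) : ℤ)) * F (0 - m) := by
        rw [h3', one_mul]
    _ = (((-1 : ℤˣ) ^ m : ℤˣ) : ℤ) * ((((-1 : ℤˣ) ^ m : ℤˣ) : ℤ) * F (0 - m)) := by ring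
    _ = (((-1 : ℤˣ) ^ m : ℤˣ) : ℤ) * (-F m) := by rw [← h2]
    _ = ((-((-1 : ℤˣ) ^ m) : ℤˣ) : ℤ) * F m := by rw [Units.val_neg]; ring
end Fib


lemma prod_neg_one_zpow {α : Type*} (s : Finset α) (t : α → ℤ) :
    ∏ i ∈ s, ((-1 : ℤˣ) ^ (t i) : ℤˣ) = ((-1 : ℤˣ) ^ (∑ i ∈ s, t i) : ℤˣ) := by
  classical
  induction s using Finset.induction with
  | empty => simp
  | insert _ _ h ih => rw [Finset.prod_insert h, Finset.sum_insert h, zpow_add, ih]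

lemma sum_rev_choose (r : ℕ) : ∑ i : Fin (r + 1), (r - (i : ℕ)) = (r + 1).choose 2 := by
  rw [Fin.sum_univ_eq_sum_range]
  induction r with
  | zero => simp
  | succ r ih =>
    rw [Finset.sum_range_succ, Nat.sub_self, add_zero]
    have h : ∑ i ∈ range (r + 1), (r + 1 - i) = ∑ i ∈ range (r + 1), ((r - i) + 1) := by
      refine Finset.sum_congr rfl fun i hi => ?_
      rw [Finset.mem_range] at hi
      omega
    rw [h, Finset.sum_add_distrib, ih, Finset.sum_const, Finset.card_range, smul_eq_mul,
      mul_one, Nat.choose_succ_succ' (r + 1) 1, Nat.choose_one_right,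
      show (1 + 1 : ℕ) = 2 from rfl]
    omega

lemma sum_mul_rev_choose (r : ℕ) :
    ∑ i ∈ range (r + 1), i * (r - i) = (r + 1).choose 3 := by
  induction r with
  | zero => rfl
  | succ r ih =>
    rw [Finset.sum_range_succ, Nat.sub_self, Nat.mul_zero, add_zero]
    have h : ∑ i ∈ range (r + 1), i * (r + 1 - i)
        = ∑ i ∈ range (r + 1), (i * (r - i) + i) := by
      refine Finset.sum_congr rfl fun i hi => ?_
      rw [Finset.mem_range] at hi
      have : r + 1 - i = (r - i) + 1 := by omega
      rw [this]; ring
    have hg : ∑ i ∈ range (r + 1), i = (r + 1).choose 2 := by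
      rw [Nat.choose_two_right]; exact Finset.sum_range_id (r + 1)
    rw [h, Finset.sum_add_distrib, ih, hg, Nat.choose_succ_succ' (r + 1) 2,
      show (2 + 1 : ℕ) = 3 from rfl]
    omega

lemma prod_diff_group {M : Type*} [CommMonoid M] (r : ℕ) (g : ℕ → M) :
    ∏ i : Fin (r + 1), ∏ j ∈ Ioi i, g ((j : ℕ) - (i : ℕ))
      = ∏ ℓ ∈ Icc 1 r, g ℓ ^ (r + 1 - ℓ) := by
  have inner : ∀ i : Fin (r + 1), ∏ j ∈ Ioi i, g ((j : ℕ) - (i : ℕ))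
      = ∏ ℓ ∈ Icc 1 (r - (i : ℕ)), g ℓ := by
    intro i
    refine Finset.prod_nbij' (fun j => (j : ℕ) - (i : ℕ))
      (fun ℓ => (⟨min ((i : ℕ) + ℓ) r, by omega⟩ : Fin (r + 1))) ?_ ?_ ?_ ?_ ?_
    · intro a ha
      rw [Finset.mem_Ioi, Fin.lt_def] at ha
      rw [Finset.mem_Icc]
      have := a.isLt
      omega
    · intro ℓ hℓ
      rw [Finset.mem_Icc] at hℓ
      rw [Finset.mem_Ioi, Fin.lt_def]
      dsimp only
      omega
    · intro a ha
      rw [Finset.mem_Ioi, Fin.lt_def] at ha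
      apply Fin.ext
      have := a.isLt
      dsimp only
      omega
    · intro ℓ hℓ
      rw [Finset.mem_Icc] at hℓ
      dsimp only
      omega
    · intro a _; rfl
  calc ∏ i : Fin (r + 1), ∏ j ∈ Ioi i, g ((j : ℕ) - (i : ℕ))
      = ∏ i ∈ range (r + 1), ∏ ℓ ∈ Icc 1 (r - i), g ℓ := by
        rw [← Fin.prod_univ_eq_prod_range (fun i => ∏ ℓ ∈ Icc 1 (r - i), g ℓ)]
        exact Finset.prod_congr rfl fun i _ => inner i
    _ = ∏ ℓ ∈ Icc 1 r, ∏ _i ∈ range (r + 1 - ℓ), g ℓ := by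
        refine Finset.prod_comm' fun i ℓ => ?_
        simp only [Finset.mem_range, Finset.mem_Icc]
        omega
    _ = ∏ ℓ ∈ Icc 1 r, g ℓ ^ (r + 1 - ℓ) := by
        refine Finset.prod_congr rfl fun ℓ _ => ?_
        rw [Finset.prod_const, Finset.card_range]

/-- Corollary 10 (Alfred's basic power determinant):
`det(F_{s+ik}^{r−j}·F_{s+(i+1)k}^{j})
  = (−1)^{(s+1)C(r+1,2)+kC(r+1,3)} · F_k^{C(r+1,2)} · ∏_{ℓ=1}^{r} F_{kℓ}^{r+1−ℓ}`
for the Fibonacci numbers extended to all integers. -/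
theorem basic_power_determinant (F : ℤ → ℤ)
    (hF0 : F 0 = 0) (hF1 : F 1 = 1)
    (hF : ∀ n : ℤ, F n = F (n - 1) + F (n - 2))
    (r : ℕ) (s k : ℤ) :
    Matrix.det (Matrix.of fun i j : Fin (r + 1) =>
        F (s + (i : ℤ) * k) ^ (r - (j : ℕ)) * F (s + ((i : ℤ) + 1) * k) ^ (j : ℕ)) =
      ((-1 : ℤˣ) ^ ((s + 1) * ((r + 1).choose 2 : ℤ) + k * ((r + 1).choose 3 : ℤ)) : ℤˣ) *
      F k ^ ((r + 1).choose 2) *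
      ∏ ℓ ∈ Finset.Icc 1 r, F (k * (ℓ : ℤ)) ^ (r + 1 - ℓ) := by
  rw [bivdet r (fun i : Fin (r + 1) => F (s + (i : ℤ) * k))
    (fun i : Fin (r + 1) => F (s + ((i : ℤ) + 1) * k))]
  -- pairwise factorization
  have pair : ∀ i j : Fin (r + 1),
      F (s + (i : ℤ) * k) * F (s + ((j : ℤ) + 1) * k)
        - F (s + (j : ℤ) * k) * F (s + ((i : ℤ) + 1) * k)
      = (((-1 : ℤˣ) ^ (s + 1 + (i : ℤ) * k) : ℤˣ) : ℤ) * F k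
          * F (k * ((j : ℤ) - (i : ℤ))) := by
    intro i j
    have hv := vajda F hF0 hF1 hF (s + (i : ℤ) * k) (s + (j : ℤ) * k) k
    rw [show s + (i : ℤ) * k + k = s + ((i : ℤ) + 1) * k by ring,
      show s + (j : ℤ) * k + k = s + ((j : ℤ) + 1) * k by ring,
      show s + (i : ℤ) * k - (s + (j : ℤ) * k) = -(k * ((j : ℤ) - (i : ℤ))) by ring,
      fib_neg F hF0 hF1 hF (k * ((j : ℤ) - (i : ℤ)))] at hv
    rw [hv]
    have hu : ((-1 : ℤˣ) ^ (s + (j : ℤ) * k) : ℤˣ)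
        * ((-1 : ℤˣ) ^ (k * ((j : ℤ) - (i : ℤ)) + 1) : ℤˣ)
        = ((-1 : ℤˣ) ^ (s + 1 + (i : ℤ) * k) : ℤˣ) := by
      rw [← zpow_add, show s + (j : ℤ) * k + (k * ((j : ℤ) - (i : ℤ)) + 1)
        = (s + 1 + (i : ℤ) * k) + 2 * (k * ((j : ℤ) - (i : ℤ))) by ring, zpow_add]
      have h2 : ((-1 : ℤˣ) ^ (2 * (k * ((j : ℤ) - (i : ℤ)))) : ℤˣ) = 1 := by
        rw [show (2 : ℤ) * (k * ((j : ℤ) - (i : ℤ))) = (k * ((j : ℤ) - (i : ℤ))) * 2 by ring,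
          zpow_mul, show (2 : ℤ) = ((2 : ℕ) : ℤ) from rfl, zpow_natCast]
        exact Int.units_sq _
      rw [h2, mul_one]
    have hu' : (((-1 : ℤˣ) ^ (s + (j : ℤ) * k) : ℤˣ) : ℤ)
        * (((-1 : ℤˣ) ^ (k * ((j : ℤ) - (i : ℤ)) + 1) : ℤˣ) : ℤ)
        = (((-1 : ℤˣ) ^ (s + 1 + (i : ℤ) * k) : ℤˣ) : ℤ) := by
      rw [← Units.val_mul, hu]
    linear_combination (F (k * ((j : ℤ) - (i : ℤ))) * F k) * hu'
  rw [Finset.prod_congr rfl fun i (_ : i ∈ Finset.univ) =>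
    Finset.prod_congr rfl fun j _ => pair i j]
  -- split the double product
  have split : ∏ i : Fin (r + 1), ∏ j ∈ Finset.Ioi i,
      ((((-1 : ℤˣ) ^ (s + 1 + (i : ℤ) * k) : ℤˣ) : ℤ) * F k * F (k * ((j : ℤ) - (i : ℤ))))
      = (∏ i : Fin (r + 1), ((((-1 : ℤˣ) ^ (s + 1 + (i : ℤ) * k) : ℤˣ) : ℤ) * F k)
          ^ (r - (i : ℕ)))
        * ∏ i : Fin (r + 1), ∏ j ∈ Finset.Ioi i, F (k * ((j : ℤ) - (i : ℤ))) := by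
    rw [← Finset.prod_mul_distrib]
    refine Finset.prod_congr rfl fun i _ => ?_
    rw [Finset.prod_mul_distrib, Finset.prod_const, Fin.card_Ioi]
    norm_num
  rw [split]
  -- the difference product
  have hdiff : ∏ i : Fin (r + 1), ∏ j ∈ Finset.Ioi i, F (k * ((j : ℤ) - (i : ℤ)))
      = ∏ ℓ ∈ Finset.Icc 1 r, F (k * (ℓ : ℤ)) ^ (r + 1 - ℓ) := by
    have : ∀ i : Fin (r + 1), ∀ j ∈ Finset.Ioi i,
        F (k * ((j : ℤ) - (i : ℤ))) = (fun ℓ : ℕ => F (k * (ℓ : ℤ))) ((j : ℕ) - (i : ℕ)) := by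
      intro i j hj
      have hij' : i < j := Finset.mem_Ioi.mp hj
      have hij : (i : ℕ) < (j : ℕ) := hij'
      have : ((((j : ℕ) - (i : ℕ) : ℕ)) : ℤ) = (j : ℤ) - (i : ℤ) := by
        push_cast [Nat.cast_sub hij.le]
        ring
      simp only
      rw [← this]
    rw [Finset.prod_congr rfl fun i (_ : i ∈ Finset.univ) =>
      Finset.prod_congr rfl (this i)]
    exact prod_diff_group r (fun ℓ : ℕ => F (k * (ℓ : ℤ)))
  rw [hdiff]
  -- the sign-and-F_k product
  have hconst : ∏ i : Fin (r + 1),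
      ((((-1 : ℤˣ) ^ (s + 1 + (i : ℤ) * k) : ℤˣ) : ℤ) * F k) ^ (r - (i : ℕ))
      = (((-1 : ℤˣ) ^ ((s + 1) * ((r + 1).choose 2 : ℤ) + k * ((r + 1).choose 3 : ℤ)) : ℤˣ) : ℤ)
        * F k ^ ((r + 1).choose 2) := by
    have step1 : ∀ i : Fin (r + 1),
        ((((-1 : ℤˣ) ^ (s + 1 + (i : ℤ) * k) : ℤˣ) : ℤ) * F k) ^ (r - (i : ℕ))
        = (((((-1 : ℤˣ) ^ ((s + 1 + (i : ℤ) * k) * ((r - (i : ℕ) : ℕ) : ℤ))) : ℤˣ) : ℤ))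
          * F k ^ (r - (i : ℕ)) := by
      intro i
      rw [mul_pow, ← Units.val_pow_eq_pow_val, ← zpow_natCast ((-1 : ℤˣ) ^ (s + 1 + (i : ℤ) * k)),
        ← zpow_mul]
    rw [Finset.prod_congr rfl fun i _ => step1 i, Finset.prod_mul_distrib,
      Finset.prod_pow_eq_pow_sum, sum_rev_choose]
    congr 1
    have := map_prod (Units.coeHom ℤ)
      (fun i : Fin (r + 1) => ((-1 : ℤˣ) ^ ((s + 1 + (i : ℤ) * k) * ((r - (i : ℕ) : ℕ) : ℤ))))
      Finset.univ
    simp only [Units.coeHom_apply] at this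
    rw [← this, prod_neg_one_zpow]
    congr 2
    have hterm : ∀ i : Fin (r + 1),
        (s + 1 + (i : ℤ) * k) * ((r - (i : ℕ) : ℕ) : ℤ)
        = (s + 1) * ((r - (i : ℕ) : ℕ) : ℤ) + k * (((i : ℕ) * (r - (i : ℕ)) : ℕ) : ℤ) := by
      intro i
      push_cast
      ring
    rw [Finset.sum_congr rfl fun i _ => hterm i, Finset.sum_add_distrib,
      ← Finset.mul_sum, ← Finset.mul_sum, ← Nat.cast_sum, ← Nat.cast_sum,
      sum_rev_choose]
    congr 2
    rw [Fin.sum_univ_eq_sum_range (fun i => i * (r - i))]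
    exact_mod_cast sum_mul_rev_choose r
  rw [hconst]
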